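/- The trivial group is the only injective object in the category of groups: if a group G has the property that every group homomorphism φ : H → G extends along every injective group homomorphism ι : H → K to a homomorphism K → G, then G is trivial. -/
import Mathlib

/-- The action of permutations of the generators on a free group. -/
def permAut (α : Type*) : Equiv.Perm α →* MulAut (FreeGroup α) where
  toFun e := FreeGroup.freeGroupCongr e
  map_one' := by
    apply MulEquiv.toMonoidHom_injective
    apply FreeGroup.ext_hom
    intro b
    simp
  map_mul' e e' := by
    apply MulEquiv.toMonoidHom_injective
    apply FreeGroup.ext_hom
    intro b
    simp

/-- The trivial group is the only injective object in the category of groups: if every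
homomorphism into `G` extends along every injective group homomorphism, then `G` is trivial. -/
theorem injective_group_is_trivial (G : Type u) [Group G]
    (hinj : ∀ (H K : Type u) [Group H] [Group K] (ι : H →* K), Function.Injective ι →
      ∀ φ : H →* G, ∃ φt : K →* G, φt.comp ι = φ) :
    ∀ g : G, g = 1 := by
  intro g
  classical
  set B := ULift.{u} Bool
  let φ : FreeGroup B →* G := FreeGroup.lift (fun b => if b.down then 1 else g)
  obtain ⟨ψ, hψ⟩ := hinj (FreeGroup B) (FreeGroup B ⋊[permAut B] Equiv.Perm B)
    SemidirectProduct.inl SemidirectProduct.inl_injective φ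
  have hφ : ∀ n : FreeGroup B, ψ (SemidirectProduct.inl n) = φ n := fun n =>
    congrArg (fun f : FreeGroup B →* G => f n) hψ
  set s : Equiv.Perm B := Equiv.swap (ULift.up false) (ULift.up true) with hs
  have hswap : (permAut B) s (FreeGroup.of (ULift.up false)) = FreeGroup.of (ULift.up true) := by
    simp [permAut, s]
  have key : (SemidirectProduct.inl (FreeGroup.of (ULift.up true)) :
      FreeGroup B ⋊[permAut B] Equiv.Perm B) =
      SemidirectProduct.inr s * SemidirectProduct.inl (FreeGroup.of (ULift.up false)) *
        (SemidirectProduct.inr s)⁻¹ := by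
    rw [← hswap, ← map_inv, SemidirectProduct.inl_aut]
  have h1 : φ (FreeGroup.of (ULift.up true)) = (1 : G) := by simp [φ]
  have h0 : φ (FreeGroup.of (ULift.up false)) = g := by simp [φ]
  have := congrArg ψ key
  rw [hφ, h1, map_mul, map_mul, hφ, h0] at this
  have : ψ (SemidirectProduct.inr s) * g * (ψ (SemidirectProduct.inr s))⁻¹ = 1 := by
    rw [← map_inv]; exact this.symm
  have := congrArg (fun x => (ψ (SemidirectProduct.inr s))⁻¹ * x * ψ (SemidirectProduct.inr s)) this
  simpa [mul_assoc] using this
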